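/- Let ρ₁, ρ₂, ρ₃, ρ₄, ρ₅ be real analytic functions near 0 with, for some C > 0 and all small ε, |ρ₁(ε)| ≤ C|ε|, |ρ₃(ε)| ≤ C|ε|, and |ρ₂(ε)| ≤ Cε², |ρ₄(ε)| ≤ Cε², |ρ₅(ε)| ≤ Cε². For small ε ≠ 0 and ν ∈ ℝ such that Q(ν,ε) := 4(β₃ − β₂T₂/T₁)²ε⁸(1+ρ₁(ε)) − T₁²ν²(1+ρ₂(ε)) + 8β₂(β₃ − β₂T₂/T₁)νε⁶(1+ρ₃(ε)) ≥ 0, set x±(ν,ε) := ±(1/2)√(Q(ν,ε)) and y(ν,ε) := ω* + ((γ₂−α₂)/2 − T₂(γ₁−α₁)/(2T₁))ε²(1+ρ₄(ε)) + ((γ₁−α₁)/2)ν(1+ρ₅(ε)). Then there exist ε₂ > 0, a constant C' > 0 and real analytic functions σ₁, σ₂, y₀ on (−ε₂,ε₂) with |σ₁(ε)| ≤ C'ε², |σ₂(ε)| ≤ C'|ε| and |y₀(ε) − ω* − ((γ₂−α₂)/2 − T₂(γ₁−α₁)/(2T₁))ε²| ≤ C'ε⁴, such that for all 0 < |ε|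 < ε₂ and all ν with Q(ν,ε) ≥ 0: x±(ν,ε)² + (T₁²(1+σ₁(ε))/(γ₁−α₁)²)·(y(ν,ε) − y₀(ε))² = (β₃ − β₂T₂/T₁)²ε⁸(1+σ₂(ε)); that is, the parametrized curve (x±(ν,ε), y(ν,ε)) lies on an ellipse centered at (0, y₀(ε)). -/

import Mathlib

open Set

set_option maxHeartbeats 4000000

theorem stmt12 (ωs T₁ T₂ α₁ α₂ γ₁ γ₂ β₂ β₃ : ℝ)
    (hT₁ : 0 < T₁) (hγα : γ₁ ≠ α₁) (hK : β₃ - β₂ * T₂ / T₁ ≠ 0)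
    (ρ₁ ρ₂ ρ₃ ρ₄ ρ₅ : ℝ → ℝ)
    (h₁an : AnalyticAt ℝ ρ₁ 0) (h₂an : AnalyticAt ℝ ρ₂ 0) (h₃an : AnalyticAt ℝ ρ₃ 0)
    (h₄an : AnalyticAt ℝ ρ₄ 0) (h₅an : AnalyticAt ℝ ρ₅ 0)
    (C e : ℝ) (hC : 0 < C) (he : 0 < e)
    (hb : ∀ ε : ℝ, |ε| < e →
      |ρ₁ ε| ≤ C * |ε| ∧ |ρ₃ ε| ≤ C * |ε| ∧
      |ρ₂ ε| ≤ C * ε ^ 2 ∧ |ρ₄ ε| ≤ C * ε ^ 2 ∧ |ρ₅ ε| ≤ C * ε ^ 2)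
    (Q : ℝ → ℝ → ℝ)
    (hQ : ∀ ν ε : ℝ, Q ν ε =
      4 * (β₃ - β₂ * T₂ / T₁) ^ 2 * ε ^ 8 * (1 + ρ₁ ε) -
        T₁ ^ 2 * ν ^ 2 * (1 + ρ₂ ε) +
        8 * β₂ * (β₃ - β₂ * T₂ / T₁) * ν * ε ^ 6 * (1 + ρ₃ ε))
    (y : ℝ → ℝ → ℝ)
    (hy : ∀ ν ε : ℝ, y ν ε =
      ωs + ((γ₂ - α₂) / 2 - T₂ * (γ₁ - α₁) / (2 * T₁)) * ε ^ 2 * (1 + ρ₄ ε) +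
        (γ₁ - α₁) / 2 * ν * (1 + ρ₅ ε)) :
    ∃ ε₂ > (0 : ℝ), ∃ C' > (0 : ℝ), ∃ σ₁ σ₂ y₀ : ℝ → ℝ,
      AnalyticOnNhd ℝ σ₁ (Ioo (-ε₂) ε₂) ∧
      AnalyticOnNhd ℝ σ₂ (Ioo (-ε₂) ε₂) ∧
      AnalyticOnNhd ℝ y₀ (Ioo (-ε₂) ε₂) ∧
      (∀ ε ∈ Ioo (-ε₂) ε₂,
        |σ₁ ε| ≤ C' * ε ^ 2 ∧ |σ₂ ε| ≤ C' * |ε| ∧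
        |y₀ ε - ωs - ((γ₂ - α₂) / 2 - T₂ * (γ₁ - α₁) / (2 * T₁)) * ε ^ 2| ≤ C' * ε ^ 4) ∧
      ∀ ε : ℝ, 0 < |ε| → |ε| < ε₂ → ∀ ν : ℝ, 0 ≤ Q ν ε →
        (Real.sqrt (Q ν ε) / 2) ^ 2 +
            T₁ ^ 2 * (1 + σ₁ ε) / (γ₁ - α₁) ^ 2 * (y ν ε - y₀ ε) ^ 2 =
          (β₃ - β₂ * T₂ / T₁) ^ 2 * ε ^ 8 * (1 + σ₂ ε) ∧
        (-(Real.sqrt (Q ν ε) / 2)) ^ 2 +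
            T₁ ^ 2 * (1 + σ₁ ε) / (γ₁ - α₁) ^ 2 * (y ν ε - y₀ ε) ^ 2 =
          (β₃ - β₂ * T₂ / T₁) ^ 2 * ε ^ 8 * (1 + σ₂ ε) := by
  have hγ : γ₁ - α₁ ≠ 0 := sub_ne_zero.mpr hγα
  have hT₁' : T₁ ≠ 0 := ne_of_gt hT₁
  have hev : ∀ᶠ x in nhds (0:ℝ), AnalyticAt ℝ ρ₁ x ∧ AnalyticAt ℝ ρ₂ x ∧
      AnalyticAt ℝ ρ₃ x ∧ AnalyticAt ℝ ρ₄ x ∧ AnalyticAt ℝ ρ₅ x :=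
    h₁an.eventually_analyticAt.and (h₂an.eventually_analyticAt.and
      (h₃an.eventually_analyticAt.and (h₄an.eventually_analyticAt.and
        h₅an.eventually_analyticAt)))
  obtain ⟨δ, hδpos, hδ⟩ := Metric.eventually_nhds_iff.mp hev
  set K := β₃ - β₂ * T₂ / T₁ with hKdef
  set B := (γ₂ - α₂) / 2 - T₂ * (γ₁ - α₁) / (2 * T₁) with hBdef
  clear_value K B
  set ε₂ := min δ (min e (min 1 (1/(2*C)))) with hε₂def
  have hε₂pos : 0 < ε₂ := lt_min hδpos (lt_min he (lt_min one_pos (by positivity)))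
  have hε₂δ : ε₂ ≤ δ := min_le_left _ _
  have hε₂e : ε₂ ≤ e := le_trans (min_le_right _ _) (min_le_left _ _)
  have hε₂1 : ε₂ ≤ 1 := le_trans (min_le_right _ _) (le_trans (min_le_right _ _) (min_le_left _ _))
  have hε₂C : ε₂ ≤ 1/(2*C) := le_trans (min_le_right _ _) (le_trans (min_le_right _ _) (min_le_right _ _))
  clear_value ε₂
  have hfacts : ∀ x : ℝ, |x| < ε₂ →
      |ρ₁ x| ≤ C * |x| ∧ |ρ₃ x| ≤ C * |x| ∧ |ρ₂ x| ≤ C * x ^ 2 ∧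
      |ρ₄ x| ≤ C * x ^ 2 ∧ |ρ₅ x| ≤ C * x ^ 2 :=
    fun x hx => hb x (lt_of_lt_of_le hx hε₂e)
  have hsmall : ∀ x : ℝ, |x| < ε₂ → C * |x| ≤ 1/2 ∧ C * x ^ 2 ≤ 1/2 ∧ |x| ≤ 1 := by
    intro x hx
    have h0 : 0 ≤ |x| := abs_nonneg x
    have h1 : |x| ≤ 1 := le_trans hx.le hε₂1
    have hle : |x| ≤ 1/(2*C) := le_trans hx.le hε₂C
    have h2 : C * |x| ≤ 1/2 := by
      calc C * |x| ≤ C * (1/(2*C)) := mul_le_mul_of_nonneg_left hle hC.le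
        _ = 1/2 := by field_simp
    refine ⟨h2, ?_, h1⟩
    have hxs : x ^ 2 ≤ |x| := by nlinarith [sq_abs x, abs_nonneg x]
    nlinarith [mul_le_mul_of_nonneg_left hxs hC.le]
  have hden : ∀ x : ℝ, |x| < ε₂ →
      1/2 ≤ 1 + ρ₂ x ∧ 1/2 ≤ 1 + ρ₅ x ∧ 1 + ρ₃ x ≤ 3/2 ∧ 1/2 ≤ 1 + ρ₃ x ∧ 1 + ρ₅ x ≤ 3/2 := by
    intro x hx
    obtain ⟨b1, b3, b2, b4, b5⟩ := hfacts x hx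
    obtain ⟨s1, s2, s3⟩ := hsmall x hx
    have a2 := abs_le.mp b2
    have a5 := abs_le.mp b5
    have a3 := abs_le.mp b3
    exact ⟨by linarith, by linarith, by linarith, by linarith, by linarith⟩
  set C' := 14*C + C + 18*β₂^2/T₁^2 + |B| *C + 9*|γ₁ - α₁| *|β₂| *|K| /T₁^2 + 1 with hC'def
  have hC'pos : 0 < C' := by rw [hC'def]; positivity
  clear_value C'
  refine ⟨ε₂, hε₂pos, C', hC'pos,
    (fun x => (1 + ρ₂ x)/(1 + ρ₅ x)^2 - 1),
    (fun x => ρ₁ x + 4*β₂^2*x^4*(1 + ρ₃ x)^2/(T₁^2*(1 + ρ₂ x))),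
    (fun x => ωs + B*x^2*(1 + ρ₄ x) + 2*(γ₁-α₁)*β₂*K*x^6*(1 + ρ₃ x)*(1 + ρ₅ x)/(T₁^2*(1 + ρ₂ x))),
    ?_, ?_, ?_, ?_, ?_⟩
  · -- σ₁ analytic
    intro x hx
    have hx' : |x| < ε₂ := abs_lt.mpr ⟨hx.1, hx.2⟩
    obtain ⟨a1, a2, a3, a4, a5⟩ := hδ (show dist x 0 < δ by
      rw [Real.dist_eq, sub_zero]; exact lt_of_lt_of_le hx' hε₂δ)
    have h5 : (1 + ρ₅ x) ≠ 0 := by have := (hden x hx').2.1; linarith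
    exact ((analyticAt_const.add a2).div ((analyticAt_const.add a5).pow 2)
      (pow_ne_zero 2 h5)).sub analyticAt_const
  · -- σ₂ analytic
    intro x hx
    have hx' : |x| < ε₂ := abs_lt.mpr ⟨hx.1, hx.2⟩
    obtain ⟨a1, a2, a3, a4, a5⟩ := hδ (show dist x 0 < δ by
      rw [Real.dist_eq, sub_zero]; exact lt_of_lt_of_le hx' hε₂δ)
    have h2 : T₁^2*(1 + ρ₂ x) ≠ 0 := by
      have := (hden x hx').1; positivity
    exact a1.add (((analyticAt_const.mul ((analyticAt_id).pow 4)).mul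
      ((analyticAt_const.add a3).pow 2)).div
      (analyticAt_const.mul (analyticAt_const.add a2)) h2)
  · -- y₀ analytic
    intro x hx
    have hx' : |x| < ε₂ := abs_lt.mpr ⟨hx.1, hx.2⟩
    obtain ⟨a1, a2, a3, a4, a5⟩ := hδ (show dist x 0 < δ by
      rw [Real.dist_eq, sub_zero]; exact lt_of_lt_of_le hx' hε₂δ)
    have h2 : T₁^2*(1 + ρ₂ x) ≠ 0 := by
      have := (hden x hx').1; positivity
    exact (analyticAt_const.add ((analyticAt_const.mul ((analyticAt_id).pow 2)).mul
      (analyticAt_const.add a4))).add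
      ((((analyticAt_const.mul ((analyticAt_id).pow 6)).mul
        (analyticAt_const.add a3)).mul (analyticAt_const.add a5)).div
        (analyticAt_const.mul (analyticAt_const.add a2)) h2)
  · -- bounds
    intro ε hε
    simp only []
    clear hδ hev hb hQ hy hδpos hε₂δ hε₂e hε₂C hKdef hBdef hε₂def
    have hx : |ε| < ε₂ := abs_lt.mpr ⟨hε.1, hε.2⟩
    obtain ⟨b1, b3, b2, b4, b5⟩ := hfacts ε hx
    obtain ⟨s1, s2, s3⟩ := hsmall ε hx
    obtain ⟨d2, d5, d3u, d3l, d5u⟩ := hden ε hx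
    have hε0 : 0 ≤ |ε| := abs_nonneg ε
    have heps2 : ε ^ 2 ≤ 1 := by nlinarith [sq_abs ε]
    have hε4 : ε^4 ≤ |ε| := by
      have h1 : ε^4 ≤ ε^2 := by nlinarith [sq_nonneg ε]
      have h2' : ε^2 ≤ |ε| := by nlinarith [sq_abs ε]
      linarith
    refine ⟨?_, ?_, ?_⟩
    · -- σ₁ bound
      have h5 : (1 + ρ₅ ε) ≠ 0 := by linarith
      have heq : (1 + ρ₂ ε)/(1 + ρ₅ ε)^2 - 1 = (ρ₂ ε - 2*ρ₅ ε - (ρ₅ ε)^2)/(1 + ρ₅ ε)^2 := by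
        field_simp
        ring
      rw [heq, abs_div, abs_of_nonneg (by positivity : (0:ℝ) ≤ (1 + ρ₅ ε)^2)]
      rw [div_le_iff₀ (by nlinarith : (0:ℝ) < (1 + ρ₅ ε)^2)]
      have h14 : 14*C ≤ C' := by
        have t1 : (0:ℝ) ≤ 18*β₂^2/T₁^2 := by positivity
        have t2 : (0:ℝ) ≤ |B| *C := by positivity
        have t3 : (0:ℝ) ≤ 9*|γ₁ - α₁| *|β₂| *|K| /T₁^2 := by positivity
        rw [hC'def]; linarith
      have hq5 : (ρ₅ ε)^2 ≤ (1/2) * (C * ε^2) := by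
        nlinarith [sq_abs (ρ₅ ε), abs_nonneg (ρ₅ ε)]
      have hd4 : (1:ℝ)/4 ≤ (1 + ρ₅ ε)^2 := by nlinarith
      have hnum : |ρ₂ ε - 2*ρ₅ ε - (ρ₅ ε)^2| ≤ 7/2*C*ε^2 := by
        rw [abs_le]
        have a2 := abs_le.mp b2
        have a5 := abs_le.mp b5
        constructor <;> nlinarith
      calc |ρ₂ ε - 2*ρ₅ ε - (ρ₅ ε)^2| ≤ 7/2*C*ε^2 := hnum
        _ ≤ C'*ε^2*(1/4) := by
            nlinarith [mul_nonneg (by linarith : (0:ℝ) ≤ C' - 14*C) (sq_nonneg ε)]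
        _ ≤ C'*ε^2*(1 + ρ₅ ε)^2 := mul_le_mul_of_nonneg_left hd4 (mul_nonneg hC'pos.le (sq_nonneg ε))
        _ = C' * ε^2 * (1 + ρ₅ ε)^2 := by ring
    · -- σ₂ bound
      have hpos2 : (0:ℝ) < T₁^2*(1 + ρ₂ ε) := by positivity
      have hterm : |4*β₂^2*ε^4*(1 + ρ₃ ε)^2/(T₁^2*(1 + ρ₂ ε))| ≤ 18*β₂^2/T₁^2 * |ε| := by
        rw [abs_of_nonneg (by positivity)]
        rw [div_le_iff₀ hpos2]
        have hg : 18*β₂^2/T₁^2*|ε| *(T₁^2*(1+ρ₂ ε)) = 18*β₂^2*|ε| *(1+ρ₂ ε) * (T₁^2/T₁^2) := by ring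
        rw [hg, div_self (by positivity : T₁^2 ≠ 0), mul_one]
        have h3sq : (1 + ρ₃ ε)^2 ≤ 9/4 := by nlinarith
        have hb4 : (0:ℝ) ≤ β₂^2*ε^4 := by positivity
        have p1 : 4*β₂^2*ε^4*(1+ρ₃ ε)^2 ≤ 9*β₂^2*ε^4 := by nlinarith
        have p2 : 9*β₂^2*ε^4 ≤ 9*β₂^2*|ε| := by
          nlinarith [mul_nonneg (sq_nonneg β₂) (by linarith : (0:ℝ) ≤ |ε| - ε^4)]
        have p3 : 9*β₂^2*|ε| ≤ 18*β₂^2*|ε| *(1+ρ₂ ε) := by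
          nlinarith [mul_nonneg (mul_nonneg (by positivity : (0:ℝ) ≤ 18*β₂^2) hε0)
            (by linarith : (0:ℝ) ≤ 1 + ρ₂ ε - 1/2)]
        linarith
      calc |ρ₁ ε + 4*β₂^2*ε^4*(1 + ρ₃ ε)^2/(T₁^2*(1 + ρ₂ ε))|
          ≤ |ρ₁ ε| + |4*β₂^2*ε^4*(1 + ρ₃ ε)^2/(T₁^2*(1 + ρ₂ ε))| := abs_add_le _ _
        _ ≤ C * |ε| + 18*β₂^2/T₁^2 * |ε| := add_le_add b1 hterm
        _ = (C + 18*β₂^2/T₁^2) * |ε| := by ring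
        _ ≤ C' * |ε| := by
            apply mul_le_mul_of_nonneg_right _ hε0
            have t2 : (0:ℝ) ≤ |B| *C := by positivity
            have t3 : (0:ℝ) ≤ 9*|γ₁ - α₁| *|β₂| *|K| /T₁^2 := by positivity
            rw [hC'def]; linarith
    · -- y₀ bound
      have hpos2 : (0:ℝ) < T₁^2*(1 + ρ₂ ε) := by positivity
      have heq : ωs + B*ε^2*(1 + ρ₄ ε) + 2*(γ₁-α₁)*β₂*K*ε^6*(1 + ρ₃ ε)*(1 + ρ₅ ε)/(T₁^2*(1 + ρ₂ ε))
          - ωs - B*ε^2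
          = B*ε^2*ρ₄ ε + (2*(γ₁-α₁)*β₂*K) * (ε^6*(1 + ρ₃ ε)*(1 + ρ₅ ε)/(T₁^2*(1 + ρ₂ ε))) := by
        field_simp
        ring
      rw [heq]
      have h1 : |B*ε^2*ρ₄ ε| ≤ |B| *C*ε^4 := by
        rw [abs_mul, abs_mul, abs_of_nonneg (sq_nonneg ε)]
        calc |B| * ε^2 * |ρ₄ ε| ≤ |B| * ε^2 * (C*ε^2) :=
              mul_le_mul_of_nonneg_left b4 (by positivity)
          _ = |B| *C*ε^4 := by ring
      have h2 : |(2*(γ₁-α₁)*β₂*K) * (ε^6*(1 + ρ₃ ε)*(1 + ρ₅ ε)/(T₁^2*(1 + ρ₂ ε)))|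
          ≤ 9*|γ₁ - α₁| *|β₂| *|K| /T₁^2 * ε^4 := by
        rw [abs_mul]
        have he6 : (0:ℝ) ≤ ε^6 := by positivity
        have he4 : (0:ℝ) ≤ ε^4 := by positivity
        have h6 : ε^6 ≤ ε^4 := by
          nlinarith [mul_nonneg he4 (by linarith : (0:ℝ) ≤ 1 - ε^2)]
        have hW : |ε^6*(1 + ρ₃ ε)*(1 + ρ₅ ε)/(T₁^2*(1 + ρ₂ ε))| ≤ (9/2) * ε^4 / T₁^2 := by
          rw [abs_of_nonneg (by positivity)]
          rw [div_le_div_iff₀ hpos2 (by positivity : (0:ℝ) < T₁^2)]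
          have hm0 : (0:ℝ) ≤ ε^6*(1 + ρ₃ ε) := mul_nonneg he6 (by linarith)
          have m1 : ε^6*(1 + ρ₃ ε) ≤ (3/2)*ε^4 := by nlinarith
          have m2 : ε^6*(1 + ρ₃ ε)*(1 + ρ₅ ε) ≤ (9/4)*ε^4 := by nlinarith
          have hT2 : (0:ℝ) < T₁^2 := by positivity
          nlinarith [mul_nonneg (mul_nonneg he4 hT2.le)
            (by linarith : (0:ℝ) ≤ 1 + ρ₂ ε - 1/2)]
        have habs : |2*(γ₁-α₁)*β₂*K| = 2*|γ₁ - α₁| *|β₂| *|K| := by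
          rw [abs_mul, abs_mul, abs_mul]; norm_num
        rw [habs]
        calc 2*|γ₁ - α₁| *|β₂| *|K| * |ε^6*(1 + ρ₃ ε)*(1 + ρ₅ ε)/(T₁^2*(1 + ρ₂ ε))|
            ≤ 2*|γ₁ - α₁| *|β₂| *|K| * ((9/2) * ε^4 / T₁^2) :=
              mul_le_mul_of_nonneg_left hW (by positivity)
          _ = 9*|γ₁ - α₁| *|β₂| *|K| /T₁^2 * ε^4 := by ring
      calc |B*ε^2*ρ₄ ε + (2*(γ₁-α₁)*β₂*K) * (ε^6*(1 + ρ₃ ε)*(1 + ρ₅ ε)/(T₁^2*(1 + ρ₂ ε)))|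
          ≤ |B*ε^2*ρ₄ ε| + |(2*(γ₁-α₁)*β₂*K) * (ε^6*(1 + ρ₃ ε)*(1 + ρ₅ ε)/(T₁^2*(1 + ρ₂ ε)))| :=
            abs_add_le _ _
        _ ≤ |B| *C*ε^4 + 9*|γ₁ - α₁| *|β₂| *|K| /T₁^2 * ε^4 := add_le_add h1 h2
        _ ≤ C' * ε^4 := by
            have he4 : (0:ℝ) ≤ ε^4 := by positivity
            have hcc : |B| *C + 9*|γ₁ - α₁| *|β₂| *|K| /T₁^2 ≤ C' := by
              have t4 : (0:ℝ) ≤ 18*β₂^2/T₁^2 := by positivity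
              rw [hC'def]; linarith
            nlinarith [mul_le_mul_of_nonneg_right hcc he4]
  · -- main identity
    intro ε hε0 hε ν hQν
    obtain ⟨d2, d5, _, _, _⟩ := hden ε hε
    have h2 : (1 + ρ₂ ε) ≠ 0 := by linarith
    have h5 : (1 + ρ₅ ε) ≠ 0 := by linarith
    have hsq : (Real.sqrt (Q ν ε) / 2) ^ 2 = Q ν ε / 4 := by
      rw [div_pow, Real.sq_sqrt hQν]; norm_num
    have main : (Real.sqrt (Q ν ε) / 2) ^ 2 +
        T₁ ^ 2 * (1 + ((1 + ρ₂ ε)/(1 + ρ₅ ε)^2 - 1)) / (γ₁ - α₁) ^ 2 *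
          (y ν ε - (ωs + B*ε^2*(1 + ρ₄ ε) +
            2*(γ₁-α₁)*β₂*K*ε^6*(1 + ρ₃ ε)*(1 + ρ₅ ε)/(T₁^2*(1 + ρ₂ ε)))) ^ 2 =
        K ^ 2 * ε ^ 8 *
          (1 + (ρ₁ ε + 4*β₂^2*ε^4*(1 + ρ₃ ε)^2/(T₁^2*(1 + ρ₂ ε)))) := by
      rw [hsq, hQ, hy]
      field_simp
      ring
    exact ⟨main, by rw [neg_sq]; exact main⟩
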